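/- Let X be a compact Hausdorff space on which a group G acts by homeomorphisms, and suppose the flow (G, X) is equicontinuous. Then the Ellis semigroup E(X) (the closure in X^X of the set of translation maps x ↦ g·x) is a group consisting of homeomorphisms of X, and composition on E(X) is jointly continuous, making E(X) a compact Hausdorff topological group. -/

import Mathlib

open Filter Topology Set

private lemma ellis_equi {G X : Type*} [Group G] [UniformSpace X] [MulAction G X]
    (hequi : ∀ α ∈ uniformity X, ∃ β ∈ uniformity X,
      ∀ x y : X, (x, y) ∈ β → ∀ g : G, (g • x, g • y) ∈ α) :
    ∀ α ∈ uniformity X, ∃ β ∈ uniformity X, ∀ y z : X, (y, z) ∈ β →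
      ∀ u ∈ closure {f : X → X | ∃ g : G, f = fun x => g • x}, (u y, u z) ∈ α := by
  intro α hα
  obtain ⟨α', ⟨hα', hcl⟩, hsub⟩ := uniformity_hasBasis_closed.mem_iff.mp hα
  obtain ⟨β, hβ, hβ'⟩ := hequi α' hα'
  refine ⟨β, hβ, fun y z hyz u hu => hsub ?_⟩
  have hC : IsClosed {u : X → X | (u y, u z) ∈ α'} :=
    hcl.preimage ((continuous_apply y).prodMk (continuous_apply z))
  refine closure_minimal ?_ hC hu
  rintro _ ⟨g, rfl⟩
  exact hβ' y z hyz g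

private lemma ellis_comp {G X : Type*} [Group G] [UniformSpace X] [MulAction G X]
    (hequi : ∀ α ∈ uniformity X, ∃ β ∈ uniformity X,
      ∀ x y : X, (x, y) ∈ β → ∀ g : G, (g • x, g • y) ∈ α) :
    ContinuousOn (fun p : (X → X) × (X → X) => p.1 ∘ p.2)
      (closure {f : X → X | ∃ g : G, f = fun x => g • x} ×ˢ
       closure {f : X → X | ∃ g : G, f = fun x => g • x}) := by
  set E := closure {f : X → X | ∃ g : G, f = fun x => g • x} with hE
  rintro ⟨f, h⟩ ⟨hf, hh⟩
  show ContinuousWithinAt (fun p : (X → X) × (X → X) => p.1 ∘ p.2) (E ×ˢ E) (f, h)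
  rw [continuousWithinAt_pi]
  intro x
  show Tendsto (fun p : (X → X) × (X → X) => p.1 (p.2 x)) (𝓝[E ×ˢ E] (f, h)) (𝓝 (f (h x)))
  rw [Uniform.tendsto_nhds_right]
  intro W hW
  rw [mem_map]
  obtain ⟨α, hα, hαW⟩ := comp_mem_uniformity_sets hW
  obtain ⟨β, hβ, hβ'⟩ := ellis_equi hequi α hα
  have ev1 : ∀ᶠ p : (X → X) × (X → X) in 𝓝[E ×ˢ E] (f, h),
      (f (h x), p.1 (h x)) ∈ α := by
    have ht : Tendsto (fun p : (X → X) × (X → X) => p.1 (h x)) (𝓝[E ×ˢ E] (f, h))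
        (𝓝 (f (h x))) :=
      (((continuous_apply (h x)).comp continuous_fst).tendsto (f, h)).mono_left
        nhdsWithin_le_nhds
    exact ht.eventually (eventually_mem_set.mpr (UniformSpace.ball_mem_nhds (f (h x)) hα))
  have ev2 : ∀ᶠ p : (X → X) × (X → X) in 𝓝[E ×ˢ E] (f, h), (h x, p.2 x) ∈ β := by
    have ht : Tendsto (fun p : (X → X) × (X → X) => p.2 x) (𝓝[E ×ˢ E] (f, h))
        (𝓝 (h x)) :=
      (((continuous_apply x).comp continuous_snd).tendsto (f, h)).mono_left
        nhdsWithin_le_nhds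
    exact ht.eventually (eventually_mem_set.mpr (UniformSpace.ball_mem_nhds (h x) hβ))
  have ev3 : ∀ᶠ p : (X → X) × (X → X) in 𝓝[E ×ˢ E] (f, h), p.1 ∈ E := by
    filter_upwards [self_mem_nhdsWithin] with p hp using hp.1
  filter_upwards [ev1, ev2, ev3] with p h1 h2 h3
  exact hαW (SetRel.prodMk_mem_comp h1 (hβ' _ _ h2 p.1 h3))



/-- If a compact Hausdorff `G`-flow `X` is equicontinuous, then its Ellis semigroup
`E(X)` — the closure in `X^X` of the set of translations `x ↦ g • x` — is a group of
homeomorphisms of `X` under composition, with jointly continuous composition (hence a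
compact Hausdorff topological group). -/
theorem ellis_semigroup_of_equicontinuous_flow_is_topological_group
    (G : Type*) [Group G]
    (X : Type*) [UniformSpace X] [CompactSpace X] [T2Space X] [MulAction G X]
    (hcont : ∀ g : G, Continuous fun x : X => g • x)
    (hequi : ∀ α ∈ uniformity X, ∃ β ∈ uniformity X,
      ∀ x y : X, (x, y) ∈ β → ∀ g : G, (g • x, g • y) ∈ α) :
    (id ∈ closure {f : X → X | ∃ g : G, f = fun x => g • x}) ∧
    (∀ f ∈ closure {f : X → X | ∃ g : G, f = fun x => g • x},
      ∀ h ∈ closure {f : X → X | ∃ g : G, f = fun x => g • x},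
        f ∘ h ∈ closure {f : X → X | ∃ g : G, f = fun x => g • x}) ∧
    (∀ f ∈ closure {f : X → X | ∃ g : G, f = fun x => g • x}, IsHomeomorph f) ∧
    (∀ f ∈ closure {f : X → X | ∃ g : G, f = fun x => g • x},
      ∃ h ∈ closure {f : X → X | ∃ g : G, f = fun x => g • x},
        f ∘ h = id ∧ h ∘ f = id) ∧
    Continuous (fun p : closure {f : X → X | ∃ g : G, f = fun x => g • x} ×
        closure {f : X → X | ∃ g : G, f = fun x => g • x} =>
      (p.1 : X → X) ∘ (p.2 : X → X)) := by
  classical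
  set S := {f : X → X | ∃ g : G, f = fun x => g • x} with hS
  set E := closure S with hE
  -- identity
  have hid : id ∈ E := subset_closure ⟨1, funext fun x => (one_smul G x).symm⟩
  -- continuity of members
  have hUC : ∀ u ∈ E, Continuous u := by
    intro u hu
    refine UniformContinuous.continuous ?_
    rw [uniformContinuous_def]
    intro α hα
    obtain ⟨β, hβ, hβ'⟩ := ellis_equi hequi α hα
    exact mem_of_superset hβ (fun p hp => hβ' p.1 p.2 hp u hu)
  -- closure under composition
  have hmul : ∀ f ∈ E, ∀ h ∈ E, f ∘ h ∈ E := by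
    intro f hf h hh
    have hc : ContinuousOn (fun p : (X → X) × (X → X) => p.1 ∘ p.2) (closure (S ×ˢ S)) := by
      rw [closure_prod_eq]; exact ellis_comp hequi
    have himg := hc.image_closure (f := fun p : (X → X) × (X → X) => p.1 ∘ p.2)
    have hmem : (f, h) ∈ closure (S ×ˢ S) := by rw [closure_prod_eq]; exact ⟨hf, hh⟩
    have h1 : f ∘ h ∈ closure ((fun p : (X → X) × (X → X) => p.1 ∘ p.2) '' (S ×ˢ S)) :=
      himg ⟨(f, h), hmem, rfl⟩
    refine closure_mono ?_ h1
    rintro _ ⟨⟨u, v⟩, ⟨⟨g, rfl⟩, ⟨g', rfl⟩⟩, rfl⟩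
    exact ⟨g * g', funext fun x => (mul_smul g g' x).symm⟩
  -- inverses
  have hinv : ∀ f ∈ E, ∃ h ∈ E, f ∘ h = id ∧ h ∘ f = id := by
    intro f hf
    obtain ⟨𝒰, hU, hUf⟩ := mem_closure_iff_ultrafilter.mp hf
    set j : (X → X) → (X → X) := fun s =>
      if hs : s ∈ S then (fun x => (Classical.choose hs)⁻¹ • x) else id with hj
    have hjS : ∀ s ∈ S, j s ∈ S := by
      intro s hs
      rw [hj]; simp only [dif_pos hs]
      exact ⟨(Classical.choose hs)⁻¹, rfl⟩
    have hjid1 : ∀ s ∈ S, s ∘ j s = id := by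
      intro s hs
      have hg := Classical.choose_spec hs
      rw [hj]; simp only [dif_pos hs]
      funext x
      show s ((Classical.choose hs)⁻¹ • x) = x
      rw [congrFun hg ((Classical.choose hs)⁻¹ • x)]
      exact smul_inv_smul _ x
    have hjid2 : ∀ s ∈ S, j s ∘ s = id := by
      intro s hs
      have hg := Classical.choose_spec hs
      rw [hj]; simp only [dif_pos hs]
      funext x
      show (Classical.choose hs)⁻¹ • s x = x
      rw [congrFun hg x]
      exact inv_smul_smul _ x
    have hVS : S ∈ 𝒰.map j := Filter.mem_map.mpr (mem_of_superset hU (fun s hs => hjS s hs))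
    have hEc : IsCompact E := isClosed_closure.isCompact
    obtain ⟨h, hhE, hVh⟩ := hEc.ultrafilter_le_nhds (𝒰.map j)
      (le_principal_iff.mpr (mem_of_superset hVS subset_closure))
    have hjt : Tendsto j ↑𝒰 (𝓝 h) := hVh
    have ht1 : Tendsto (fun s : X → X => ((s, j s) : (X → X) × (X → X))) ↑𝒰
        (𝓝[E ×ˢ E] (f, h)) := by
      rw [tendsto_nhdsWithin_iff]
      refine ⟨?_, ?_⟩
      · rw [nhds_prod_eq]; exact (tendsto_id'.mpr hUf).prodMk hjt
      filter_upwards [hU] with s hs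
      exact ⟨subset_closure hs, subset_closure (hjS s hs)⟩
    have ht2 : Tendsto (fun s : X → X => ((j s, s) : (X → X) × (X → X))) ↑𝒰
        (𝓝[E ×ˢ E] (h, f)) := by
      rw [tendsto_nhdsWithin_iff]
      refine ⟨?_, ?_⟩
      · rw [nhds_prod_eq]; exact hjt.prodMk (tendsto_id'.mpr hUf)
      filter_upwards [hU] with s hs
      exact ⟨subset_closure (hjS s hs), subset_closure hs⟩
    have hcw1 := (ellis_comp hequi (f, h) ⟨hf, hhE⟩).tendsto.comp ht1
    have hcw2 := (ellis_comp hequi (h, f) ⟨hhE, hf⟩).tendsto.comp ht2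
    have heq1 : (fun s : X → X => s ∘ j s) =ᶠ[↑𝒰] fun _ => id := by
      filter_upwards [hU] with s hs using hjid1 s hs
    have heq2 : (fun s : X → X => j s ∘ s) =ᶠ[↑𝒰] fun _ => id := by
      filter_upwards [hU] with s hs using hjid2 s hs
    have hfh : f ∘ h = id := (tendsto_const_nhds_iff.mp (hcw1.congr' heq1)).symm
    have hhf : h ∘ f = id := (tendsto_const_nhds_iff.mp (hcw2.congr' heq2)).symm
    exact ⟨h, hhE, hfh, hhf⟩
  -- homeomorphisms
  have hhomeo : ∀ f ∈ E, IsHomeomorph f := by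
    intro f hf
    obtain ⟨h, hh, h1, h2⟩ := hinv f hf
    exact (Homeomorph.mk ⟨f, h, fun x => congrFun h2 x, fun x => congrFun h1 x⟩
      (hUC f hf) (hUC h hh)).isHomeomorph
  -- joint continuity
  have hjoint : Continuous (fun p : E × E => (p.1 : X → X) ∘ (p.2 : X → X)) :=
    (ellis_comp hequi).comp_continuous
      ((continuous_subtype_val.comp continuous_fst).prodMk
        (continuous_subtype_val.comp continuous_snd))
      (fun p => ⟨p.1.2, p.2.2⟩)
  exact ⟨hid, hmul, hhomeo, hinv, hjoint⟩
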